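/- arXiv:1307.7544 — 5 statements merged into one kernel-verified Lean document; each statement's English description precedes it below -/
import Mathlib

section
/- If A is an n×(mr) complex matrix partitioned into m blocks A_1,...,A_m each of size n×r, with unit-norm columns and orthonormal columns within each block, and if mr > n, then the worst-case block coherence μ(A) = max_{i≠j} ‖A_i* A_j‖ (operator norm) satisfies μ(A) ≥ sqrt((mr - n)/(n(m-1))). -/
open Matrix Finset Filter

noncomputable def specNorm {α β : Type*} [Fintype α] [Fintype β] [DecidableEq β]
    (X : Matrix α β ℂ) : ℝ :=
  ‖LinearMap.toContinuousLinearMap (Matrix.toEuclideanLin X)‖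

lemma col_sq_sum_le {α β : Type*} [Fintype α] [Fintype β] [DecidableEq β]
    (X : Matrix α β ℂ) (b : β) :
    ∑ a, ‖X a b‖^2 ≤ (specNorm X)^2 := by
  set f := LinearMap.toContinuousLinearMap (Matrix.toEuclideanLin X)
  set v : EuclideanSpace ℂ β := EuclideanSpace.single b 1
  have hv : ‖v‖ = 1 := by simp [v, EuclideanSpace.norm_single]
  have h1 : ‖f v‖ ≤ specNorm X := by
    have := f.le_opNorm v
    simpa [hv, specNorm] using this
  have h2 : ‖f v‖^2 = ∑ a, ‖X a b‖^2 := by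
    have hfv : f v = Matrix.toEuclideanLin X v := rfl
    have : Matrix.toEuclideanLin X v =
        (WithLp.equiv 2 (α → ℂ)).symm (X *ᵥ Pi.single b 1) := by
      rw [Matrix.toEuclideanLin_apply]
      congr 1
    rw [hfv, this, EuclideanSpace.norm_eq, Real.sq_sqrt (by positivity)]
    congr 1
    ext a
    simp [Matrix.mulVec_single]
  calc ∑ a, ‖X a b‖^2 = ‖f v‖^2 := h2.symm
    _ ≤ (specNorm X)^2 := by nlinarith [h1, norm_nonneg (f v)]

lemma trace_mul_conjT {α β : Type*} [Fintype α] [Fintype β]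
    (X : Matrix α β ℂ) :
    Matrix.trace (X * Xᴴ) = ((∑ a, ∑ b, ‖X a b‖^2 : ℝ) : ℂ) := by
  simp only [Matrix.trace, Matrix.diag_apply, Matrix.mul_apply, Matrix.conjTranspose_apply]
  push_cast
  refine Finset.sum_congr rfl (fun a _ => Finset.sum_congr rfl (fun b _ => ?_))
  rw [show star (X a b) = (starRingEnd ℂ) (X a b) from rfl, Complex.mul_conj]
  rw [Complex.normSq_eq_norm_sq]
  push_cast
  ring

/-- Universal lower bound on worst-case block coherence. -/
theorem stmt0 (n m r : ℕ) (hn : 0 < n) (hr : 0 < r) (hm : 2 ≤ m)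
    (hrn : r < n) (hmr : n < m * r)
    (A : Fin m → Matrix (Fin n) (Fin r) ℂ)
    (horth : ∀ i, (A i)ᴴ * A i = 1)
    (hne : (Finset.univ.filter (fun pr : Fin m × Fin m => pr.1 ≠ pr.2)).Nonempty) :
    Real.sqrt (((m : ℝ) * r - n) / (n * ((m : ℝ) - 1))) ≤
      (Finset.univ.filter (fun pr : Fin m × Fin m => pr.1 ≠ pr.2)).sup' hne
        (fun pr => specNorm ((A pr.1)ᴴ * A pr.2)) := by
  classical
  set s := Finset.univ.filter (fun pr : Fin m × Fin m => pr.1 ≠ pr.2) with hs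
  set μ := s.sup' hne (fun pr => specNorm ((A pr.1)ᴴ * A pr.2)) with hμdef
  obtain ⟨p0, hp0⟩ := hne
  have hμ0 : 0 ≤ μ :=
    le_trans (norm_nonneg _)
      (Finset.le_sup' (fun pr : Fin m × Fin m => specNorm ((A pr.1)ᴴ * A pr.2)) hp0)
  set F : Fin m → Fin m → ℝ := fun i j => ∑ a, ∑ b, ‖((A i)ᴴ * A j) a b‖^2 with hF
  -- off-diagonal Frobenius bound
  have hFμ : ∀ p ∈ s, F p.1 p.2 ≤ r * μ^2 := by
    intro p hp
    have hspec : specNorm ((A p.1)ᴴ * A p.2) ≤ μ := Finset.le_sup' (fun pr : Fin m × Fin m => specNorm ((A pr.1)ᴴ * A pr.2)) hp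
    have h1 : F p.1 p.2 = ∑ b, ∑ a, ‖((A p.1)ᴴ * A p.2) a b‖^2 := Finset.sum_comm
    rw [h1]
    calc ∑ b : Fin r, ∑ a, ‖((A p.1)ᴴ * A p.2) a b‖^2
        ≤ ∑ _b : Fin r, μ^2 := Finset.sum_le_sum (fun b _ =>
          le_trans (col_sq_sum_le _ b) (pow_le_pow_left₀ (norm_nonneg _) hspec 2))
      _ = r * μ^2 := by simp [mul_comm]
  -- diagonal Frobenius value
  have hFd : ∀ i, F i i = (r : ℝ) := by
    intro i
    have h1 : ∀ a : Fin r, ∑ b, ‖(1 : Matrix (Fin r) (Fin r) ℂ) a b‖^2 = 1 := by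
      intro a
      rw [Finset.sum_eq_single a (fun b _ hb => by simp [Matrix.one_apply_ne' hb])
        (by simp)]
      simp
    simp only [hF, horth i]
    simp only [h1]
    simp
  -- the matrix H
  set H : Matrix (Fin n) (Fin n) ℂ := ∑ i, A i * (A i)ᴴ with hH
  set d : Fin n → ℝ := fun a => ∑ i, ∑ k, ‖A i a k‖^2 with hd
  have hHaa : ∀ a, H a a = (d a : ℂ) := by
    intro a
    simp only [hH, Matrix.sum_apply, Matrix.mul_apply, Matrix.conjTranspose_apply, hd]
    push_cast
    refine Finset.sum_congr rfl fun i _ => Finset.sum_congr rfl fun k _ => ?_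
    rw [show star (A i a k) = (starRingEnd ℂ) (A i a k) from rfl, Complex.mul_conj,
      Complex.normSq_eq_norm_sq]
    push_cast; ring
  have hcol : ∀ i (k : Fin r), ∑ a, ‖A i a k‖^2 = 1 := by
    intro i k
    have h := congrFun (congrFun (horth i) k) k
    simp only [Matrix.mul_apply, Matrix.conjTranspose_apply, Matrix.one_apply_eq] at h
    have h2 : ((∑ a, ‖A i a k‖^2 : ℝ) : ℂ) = 1 := by
      rw [← h]
      push_cast
      refine Finset.sum_congr rfl fun a _ => ?_
      rw [show star (A i a k) = (starRingEnd ℂ) (A i a k) from rfl]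
      rw [mul_comm, Complex.mul_conj, Complex.normSq_eq_norm_sq]
      push_cast; ring
    exact_mod_cast h2
  have hsumd : ∑ a, d a = (m : ℝ) * r := by
    have h1 : ∑ a, d a = ∑ i, ∑ k : Fin r, ∑ a : Fin n, ‖A i a k‖^2 := by
      rw [Finset.sum_comm]
      exact Finset.sum_congr rfl fun i _ => Finset.sum_comm
    rw [h1]
    simp only [hcol]
    simp
  -- trace identities
  have htr2 : Matrix.trace (H * H) = ((∑ i, ∑ j, F i j : ℝ) : ℂ) := by
    have hHH : H * H = ∑ i, ∑ j, (A i * (A i)ᴴ) * (A j * (A j)ᴴ) := by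
      rw [hH, Finset.sum_mul_sum]
    rw [hHH, Matrix.trace_sum]
    simp_rw [Matrix.trace_sum]
    push_cast
    refine Finset.sum_congr rfl fun i _ => Finset.sum_congr rfl fun j _ => ?_
    calc Matrix.trace ((A i * (A i)ᴴ) * (A j * (A j)ᴴ))
        = Matrix.trace (A i * ((A i)ᴴ * A j * (A j)ᴴ)) := by
          simp only [Matrix.mul_assoc]
      _ = Matrix.trace (((A i)ᴴ * A j * (A j)ᴴ) * A i) := Matrix.trace_mul_comm _ _
      _ = Matrix.trace (((A i)ᴴ * A j) * ((A i)ᴴ * A j)ᴴ) := by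
          rw [Matrix.conjTranspose_mul, Matrix.conjTranspose_conjTranspose, Matrix.mul_assoc]
      _ = ((F i j : ℝ) : ℂ) := trace_mul_conjT _
  have hHh : Hᴴ = H := by
    rw [hH, Matrix.conjTranspose_sum]
    exact Finset.sum_congr rfl fun i _ => by
      rw [Matrix.conjTranspose_mul, Matrix.conjTranspose_conjTranspose]
  have htr2' : Matrix.trace (H * H) = ((∑ a, ∑ b, ‖H a b‖^2 : ℝ) : ℂ) := by
    have h := trace_mul_conjT H
    rwa [hHh] at h
  have hFH : (∑ i, ∑ j, F i j) = ∑ a, ∑ b, ‖H a b‖^2 := by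
    have h := htr2.symm.trans htr2'
    exact_mod_cast h
  -- Chebyshev / Cauchy-Schwarz step
  have hd0 : ∀ a, 0 ≤ d a :=
    fun a => Finset.sum_nonneg fun i _ => Finset.sum_nonneg fun k _ => by positivity
  have hdiag : ∀ a, (d a)^2 = ‖H a a‖^2 := by
    intro a
    rw [hHaa a, Complex.norm_real, Real.norm_eq_abs, sq_abs]
  have hcheb : ((m:ℝ) * r)^2 ≤ n * ∑ i, ∑ j, F i j := by
    have h1 : (∑ a, d a)^2 ≤ (n : ℝ) * ∑ a, (d a)^2 := by
      have h := sq_sum_le_card_mul_sum_sq (s := (univ : Finset (Fin n))) (f := d)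
      simpa using h
    have h2 : ∑ a, (d a)^2 ≤ ∑ a, ∑ b, ‖H a b‖^2 := by
      refine Finset.sum_le_sum fun a _ => ?_
      rw [hdiag a]
      exact Finset.single_le_sum (f := fun b => ‖H a b‖^2)
        (fun b _ => by positivity) (Finset.mem_univ a)
    calc ((m:ℝ)*r)^2 = (∑ a, d a)^2 := by rw [hsumd]
      _ ≤ n * ∑ a, (d a)^2 := h1
      _ ≤ n * ∑ a, ∑ b, ‖H a b‖^2 := mul_le_mul_of_nonneg_left h2 (by positivity)
      _ = n * ∑ i, ∑ j, F i j := by rw [hFH]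
  -- split the double sum
  have hsplit : ∑ i, ∑ j, F i j = (m : ℝ) * r + ∑ p ∈ s, F p.1 p.2 := by
    have e1 : ∀ i j, F i j = (if i = j then F i j else 0) + (if i = j then 0 else F i j) := by
      intro i j; by_cases h : i = j <;> simp [h]
    have e2 : ∑ p ∈ s, F p.1 p.2
        = ∑ i, ∑ j, (if i = j then 0 else F i j) := by
      rw [hs, Finset.sum_filter]
      rw [Fintype.sum_prod_type]
      refine Finset.sum_congr rfl fun i _ => Finset.sum_congr rfl fun j _ => ?_
      by_cases h : i = j <;> simp [h]
    calc ∑ i, ∑ j, F i j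
        = ∑ i, ∑ j, ((if i = j then F i j else 0) + (if i = j then 0 else F i j)) := by
          refine Finset.sum_congr rfl fun i _ => Finset.sum_congr rfl fun j _ => ?_
          exact e1 i j
      _ = (∑ i, ∑ j, (if i = j then F i j else 0))
          + ∑ i, ∑ j, (if i = j then 0 else F i j) := by
          rw [← Finset.sum_add_distrib]
          exact Finset.sum_congr rfl fun i _ => Finset.sum_add_distrib
      _ = (m : ℝ) * r + ∑ p ∈ s, F p.1 p.2 := by
          rw [← e2]
          congr 1
          have : ∀ i : Fin m, ∑ j, (if i = j then F i j else 0) = F i i := by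
            intro i; simp
          simp only [this, hFd]
          simp [mul_comm]
  -- cardinality
  have hcard : s.card = m * m - m := by
    have h : s = (univ : Finset (Fin m)).offDiag := by
      ext p
      simp [hs, Finset.mem_offDiag]
    rw [h, Finset.offDiag_card]
    simp
  -- key inequality
  have hmm : (m : ℝ) ≥ 2 := by exact_mod_cast hm
  have hnn : (n : ℝ) ≥ 1 := by exact_mod_cast hn
  have hrr : (r : ℝ) ≥ 1 := by exact_mod_cast hr
  have hmrr : (n : ℝ) < m * r := by exact_mod_cast hmr
  have hcardR : (s.card : ℝ) = (m : ℝ) * m - m := by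
    rw [hcard]
    have : m ≤ m * m := Nat.le_mul_of_pos_left m (by omega)
    push_cast [Nat.cast_sub this]
    ring
  have hkey : ((m:ℝ)*r)^2 ≤ n * ((m:ℝ)*r + ((m:ℝ)*m - m) * (r * μ^2)) := by
    refine le_trans hcheb (mul_le_mul_of_nonneg_left ?_ (by positivity))
    rw [hsplit]
    have h3 : ∑ p ∈ s, F p.1 p.2 ≤ s.card * (r * μ^2) := by
      calc ∑ p ∈ s, F p.1 p.2 ≤ ∑ _p ∈ s, (r * μ^2 : ℝ) := Finset.sum_le_sum hFμ
        _ = s.card * (r * μ^2) := by rw [Finset.sum_const, nsmul_eq_mul]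
    rw [hcardR] at h3
    linarith
  have hμ2 : ((m:ℝ)*r - n) / (n * ((m:ℝ) - 1)) ≤ μ^2 := by
    have hpos : (0:ℝ) < n * ((m:ℝ) - 1) := by nlinarith
    rw [div_le_iff₀ hpos]
    have hmrpos : (0:ℝ) < (m:ℝ) * r := by nlinarith
    nlinarith [hkey, sq_nonneg μ, hmrpos]
  calc Real.sqrt (((m : ℝ) * r - n) / (n * ((m : ℝ) - 1)))
      ≤ Real.sqrt (μ^2) := Real.sqrt_le_sqrt hμ2
    _ = μ := Real.sqrt_sq hμ0
end

section
/- If A is a matrix that is a union of at least two n×n orthonormal bases, each partitioned into blocks of size n×r with r dividing n, then its worst-case block coherence satisfies μ(A) ≥ sqrt(r/n). -/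
open Matrix Finset Filter

/-- The `i`-th size `n × r` column block of a matrix whose columns are indexed by
`Fin k × Fin r`. -/
def blockOf {n k r : ℕ} (P : Matrix (Fin n) (Fin k × Fin r) ℂ) (i : Fin k) :
    Matrix (Fin n) (Fin r) ℂ :=
  fun a b => P a (i, b)

/-- Squared Frobenius norm. -/
noncomputable def frobSq {α β : Type*} [Fintype α] [Fintype β] (X : Matrix α β ℂ) : ℝ :=
  ∑ a, ∑ b, ‖X a b‖ ^ 2

lemma specNorm_nonneg {α β : Type*} [Fintype α] [Fintype β] [DecidableEq β]
    (X : Matrix α β ℂ) : 0 ≤ specNorm X := norm_nonneg _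

lemma col_sq_le {α β : Type*} [Fintype α] [Fintype β] [DecidableEq β]
    (X : Matrix α β ℂ) (b : β) : ∑ a, ‖X a b‖ ^ 2 ≤ specNorm X ^ 2 := by
  set v : EuclideanSpace ℂ β := EuclideanSpace.single b 1 with hv
  have h1 : ‖(LinearMap.toContinuousLinearMap (Matrix.toEuclideanLin X)) v‖ ≤ specNorm X * ‖v‖ :=
    ContinuousLinearMap.le_opNorm _ _
  have hvn : ‖v‖ = 1 := by simp [hv, EuclideanSpace.norm_single]
  have happ : (LinearMap.toContinuousLinearMap (Matrix.toEuclideanLin X)) v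
      = Matrix.toEuclideanLin X v := rfl
  have hy : ∀ a, (Matrix.toEuclideanLin X v) a = X a b := by
    intro a
    have h0 : (Matrix.toEuclideanLin X v) a = ∑ c, X a c * v c := rfl
    rw [h0, hv]
    simp [EuclideanSpace.single_apply]
  have hnorm : ‖Matrix.toEuclideanLin X v‖ ^ 2 = ∑ a, ‖X a b‖ ^ 2 := by
    rw [EuclideanSpace.norm_eq, Real.sq_sqrt (by positivity)]
    exact Finset.sum_congr rfl fun a _ => by rw [hy]
  calc ∑ a, ‖X a b‖ ^ 2 = ‖Matrix.toEuclideanLin X v‖ ^ 2 := hnorm.symm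
    _ ≤ (specNorm X * ‖v‖) ^ 2 := by
        apply pow_le_pow_left₀ (norm_nonneg _)
        rw [← happ]; exact h1
    _ = specNorm X ^ 2 := by rw [hvn, mul_one]

lemma frobSq_le {α β : Type*} [Fintype α] [Fintype β] [DecidableEq β]
    (X : Matrix α β ℂ) : frobSq X ≤ (Fintype.card β : ℝ) * specNorm X ^ 2 := by
  rw [frobSq, Finset.sum_comm]
  calc ∑ b, ∑ a, ‖X a b‖ ^ 2 ≤ ∑ _b : β, specNorm X ^ 2 :=
        Finset.sum_le_sum fun b _ => col_sq_le X b
    _ = (Fintype.card β : ℝ) * specNorm X ^ 2 := by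
        rw [Finset.sum_const, Finset.card_univ, nsmul_eq_mul]

lemma frobSq_of_gram_one {α β : Type*} [Fintype α] [Fintype β] [DecidableEq β]
    (X : Matrix α β ℂ) (h : Xᴴ * X = 1) : frobSq X = Fintype.card β := by
  rw [frobSq, Finset.sum_comm]
  have hb : ∀ b : β, ∑ a, ‖X a b‖ ^ 2 = 1 := by
    intro b
    have h1 : (Xᴴ * X) b b = 1 := by rw [h]; simp
    rw [Matrix.mul_apply] at h1
    have : (((∑ a, ‖X a b‖ ^ 2 : ℝ)) : ℂ) = 1 := by
      push_cast
      rw [← h1]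
      exact Finset.sum_congr rfl fun a _ => by
        rw [Matrix.conjTranspose_apply]
        simp [Complex.star_def, Complex.conj_mul', Complex.sq_norm]
    exact_mod_cast this
  rw [Finset.sum_congr rfl fun b _ => hb b, Finset.sum_const, Finset.card_univ,
    nsmul_eq_mul, mul_one]

set_option maxHeartbeats 1000000 in
/-- Lower bound sqrt(r/n) on the worst-case block coherence of a union of t ≥ 2
orthonormal bases of ℂ^n (n = k·r), each split into k column blocks of size n×r. -/
theorem stmt3 (k r t : ℕ) (hk : 0 < k) (hr : 0 < r) (ht : 2 ≤ t)
    (A : Fin t → Matrix (Fin (k * r)) (Fin k × Fin r) ℂ)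
    (hunit : ∀ ℓ, (A ℓ)ᴴ * A ℓ = 1)
    (hne : (Finset.univ.filter
      (fun pr : (Fin t × Fin k) × (Fin t × Fin k) => pr.1 ≠ pr.2)).Nonempty) :
    Real.sqrt ((r : ℝ) / ((k * r : ℕ) : ℝ)) ≤
      (Finset.univ.filter
        (fun pr : (Fin t × Fin k) × (Fin t × Fin k) => pr.1 ≠ pr.2)).sup' hne
        (fun pr => specNorm ((blockOf (A pr.1.1) pr.1.2)ᴴ * blockOf (A pr.2.1) pr.2.2)) := by
  set μ := (Finset.univ.filter
        (fun pr : (Fin t × Fin k) × (Fin t × Fin k) => pr.1 ≠ pr.2)).sup' hne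
        (fun pr => specNorm ((blockOf (A pr.1.1) pr.1.2)ᴴ * blockOf (A pr.2.1) pr.2.2)) with hμ
  have hμ0 : 0 ≤ μ := by
    rw [hμ]
    exact le_trans (specNorm_nonneg _) (by simpa using Finset.le_sup' (fun pr => specNorm ((blockOf (A pr.1.1) pr.1.2)ᴴ * blockOf (A pr.2.1) pr.2.2)) hne.choose_spec)
  -- two distinct bases
  set ℓ₁ : Fin t := ⟨0, by omega⟩ with hℓ₁
  set ℓ₂ : Fin t := ⟨1, by omega⟩ with hℓ₂
  have hℓne : ℓ₁ ≠ ℓ₂ := by simp [hℓ₁, hℓ₂, Fin.ext_iff]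
  set G := (A ℓ₁)ᴴ * A ℓ₂ with hG
  have hAA : A ℓ₁ * (A ℓ₁)ᴴ = 1 :=
    (Matrix.mul_eq_one_comm_of_equiv finProdFinEquiv.symm).mpr (hunit ℓ₁)
  have hGram : Gᴴ * G = 1 := by
    rw [hG, Matrix.conjTranspose_mul, Matrix.conjTranspose_conjTranspose,
      Matrix.mul_assoc, ← Matrix.mul_assoc (A ℓ₁), hAA, Matrix.one_mul, hunit ℓ₂]
  have hfrob : frobSq G = (k * r : ℕ) := by
    rw [frobSq_of_gram_one G hGram]
    simp [Fintype.card_prod, mul_comm]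
  -- specNorm of every block is at most μ
  have hblock_le : ∀ i j : Fin k,
      specNorm ((blockOf (A ℓ₁) i)ᴴ * blockOf (A ℓ₂) j) ≤ μ := by
    intro i j
    have hmem : ((ℓ₁, i), (ℓ₂, j)) ∈ (Finset.univ.filter
        (fun pr : (Fin t × Fin k) × (Fin t × Fin k) => pr.1 ≠ pr.2)) := by
      refine Finset.mem_filter.mpr ⟨Finset.mem_univ _, ?_⟩
      intro hc
      exact hℓne (congrArg Prod.fst hc)
    rw [hμ]
    simpa using Finset.le_sup' (fun pr => specNorm ((blockOf (A pr.1.1) pr.1.2)ᴴ * blockOf (A pr.2.1) pr.2.2)) hmem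
  -- decompose frobSq G as sum over block pairs
  have hdecomp : frobSq G = ∑ i : Fin k, ∑ j : Fin k,
      frobSq ((blockOf (A ℓ₁) i)ᴴ * blockOf (A ℓ₂) j) := by
    have hentry : ∀ (i : Fin k) (b : Fin r) (j : Fin k) (c : Fin r),
        G (i, b) (j, c) = ((blockOf (A ℓ₁) i)ᴴ * blockOf (A ℓ₂) j) b c := by
      intros i b j c
      simp [hG, Matrix.mul_apply, Matrix.conjTranspose_apply, blockOf]
    rw [frobSq]
    calc ∑ p : Fin k × Fin r, ∑ q : Fin k × Fin r, ‖G p q‖ ^ 2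
        = ∑ i : Fin k, ∑ b : Fin r, ∑ j : Fin k, ∑ c : Fin r, ‖G (i,b) (j,c)‖ ^ 2 := by
          rw [Fintype.sum_prod_type]
          exact Finset.sum_congr rfl fun i _ => Finset.sum_congr rfl fun b _ => by
            rw [Fintype.sum_prod_type]
      _ = ∑ i : Fin k, ∑ j : Fin k, ∑ b : Fin r, ∑ c : Fin r,
            ‖((blockOf (A ℓ₁) i)ᴴ * blockOf (A ℓ₂) j) b c‖ ^ 2 := by
          refine Finset.sum_congr rfl fun i _ => ?_
          rw [Finset.sum_comm]
          exact Finset.sum_congr rfl fun j _ => Finset.sum_congr rfl fun b _ =>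
            Finset.sum_congr rfl fun c _ => by rw [hentry]
      _ = ∑ i : Fin k, ∑ j : Fin k, frobSq ((blockOf (A ℓ₁) i)ᴴ * blockOf (A ℓ₂) j) := rfl
  -- main inequality
  have hkey : ((k : ℝ) * r) ≤ (k : ℝ) * k * (r * μ ^ 2) := by
    have h1 : frobSq G ≤ ∑ i : Fin k, ∑ j : Fin k, (r : ℝ) * μ ^ 2 := by
      rw [hdecomp]
      refine Finset.sum_le_sum fun i _ => Finset.sum_le_sum fun j _ => ?_
      calc frobSq ((blockOf (A ℓ₁) i)ᴴ * blockOf (A ℓ₂) j)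
          ≤ (Fintype.card (Fin r) : ℝ) * specNorm ((blockOf (A ℓ₁) i)ᴴ * blockOf (A ℓ₂) j) ^ 2 :=
            frobSq_le _
        _ ≤ (r : ℝ) * μ ^ 2 := by
            rw [Fintype.card_fin]
            exact mul_le_mul_of_nonneg_left
              (pow_le_pow_left₀ (specNorm_nonneg _) (hblock_le i j) 2) (by positivity)
    have h2 : (∑ _i : Fin k, ∑ _j : Fin k, (r : ℝ) * μ ^ 2) = (k : ℝ) * k * (r * μ ^ 2) := by
      simp [Finset.sum_const, Finset.card_univ]; ring
    calc ((k : ℝ) * r) = frobSq G := by rw [hfrob]; push_cast; ring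
      _ ≤ _ := h1
      _ = _ := h2
  have hksq : (1 : ℝ) / k ≤ μ ^ 2 := by
    have hk' : (0 : ℝ) < k := by exact_mod_cast hk
    have hr' : (0 : ℝ) < r := by exact_mod_cast hr
    rw [div_le_iff₀ hk']
    nlinarith [hkey, mul_pos hk' hr', sq_nonneg μ]
  have hdiv : (r : ℝ) / ((k * r : ℕ) : ℝ) = 1 / k := by
    have hr' : (0 : ℝ) < r := by exact_mod_cast hr
    push_cast
    field_simp
  rw [hdiv]
  calc Real.sqrt (1 / k) ≤ Real.sqrt (μ ^ 2) := Real.sqrt_le_sqrt hksq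
    _ = μ := by rw [Real.sqrt_sq hμ0]
end

section
/- If A = P ⊗ Q where Q ∈ ℂ^{r×r} is unitary and P ∈ ℂ^{(n/r)×m} has unit-norm columns, then the average block coherence of A equals the average column coherence of P: ν(A) = ν₁(P). -/
open Matrix Finset Filter

/-- The Kronecker product `p ⊗ Q` of a column vector `p ∈ ℂ^k` with an `r × r`
matrix `Q`, viewed as a `(k·r) × r` matrix (rows indexed by `Fin k × Fin r`). -/
def kronBlock {k r : ℕ} (p : Fin k → ℂ) (Q : Matrix (Fin r) (Fin r) ℂ) :
    Matrix (Fin k × Fin r) (Fin r) ℂ :=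
  fun st b => p st.1 * Q st.2 b

lemma kron_mul {k r : ℕ} (p q : Fin k → ℂ) (Q : Matrix (Fin r) (Fin r) ℂ)
    (hQ : Qᴴ * Q = 1) :
    (kronBlock p Q)ᴴ * kronBlock q Q = (star p ⬝ᵥ q) • (1 : Matrix (Fin r) (Fin r) ℂ) := by
  ext a b
  simp only [Matrix.mul_apply, conjTranspose_apply, kronBlock, Matrix.smul_apply, smul_eq_mul]
  rw [← hQ]
  simp only [Matrix.mul_apply, conjTranspose_apply, dotProduct, Pi.star_apply,
    Fintype.sum_prod_type, star_mul', Finset.sum_mul, Finset.mul_sum]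
  rw [Finset.sum_comm]
  apply Finset.sum_congr rfl
  intro s _
  apply Finset.sum_congr rfl
  intro t _
  ring

lemma specNorm_smul_one {r : ℕ} (hr : 0 < r) (c : ℂ) :
    specNorm (c • (1 : Matrix (Fin r) (Fin r) ℂ)) = ‖c‖ := by
  haveI : Nontrivial (EuclideanSpace ℂ (Fin r)) := by
    haveI : Nonempty (Fin r) := ⟨⟨0, hr⟩⟩
    infer_instance
  unfold specNorm
  have h1 : Matrix.toEuclideanLin (1 : Matrix (Fin r) (Fin r) ℂ) = LinearMap.id := by
    simp [Matrix.toEuclideanLin_eq_toLin]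
  rw [_root_.map_smul, _root_.map_smul, h1]
  have h2 : LinearMap.toContinuousLinearMap (LinearMap.id (R := ℂ) (M := EuclideanSpace ℂ (Fin r)))
      = ContinuousLinearMap.id ℂ _ := rfl
  rw [h2, norm_smul c (ContinuousLinearMap.id ℂ (EuclideanSpace ℂ (Fin r))),
    ContinuousLinearMap.norm_id, mul_one]

/-- For A = P ⊗ Q with Q unitary and P having unit-norm columns, the average block
coherence of A equals the average column coherence of P. -/
theorem stmt8 (k r m : ℕ) (hr : 0 < r) (hm : 2 ≤ m)
    (p : Fin m → (Fin k → ℂ)) (Q : Matrix (Fin r) (Fin r) ℂ) (hQ : Qᴴ * Q = 1)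
    (hcol : ∀ i, star (p i) ⬝ᵥ p i = 1)
    (hne : (Finset.univ : Finset (Fin m)).Nonempty) :
    (1 / ((m : ℝ) - 1)) * Finset.univ.sup' hne (fun i =>
        specNorm (∑ j ∈ Finset.univ.erase i, (kronBlock (p i) Q)ᴴ * kronBlock (p j) Q)) =
    (1 / ((m : ℝ) - 1)) * Finset.univ.sup' hne (fun i =>
        ‖∑ j ∈ Finset.univ.erase i, star (p i) ⬝ᵥ p j‖) := by
  congr 1
  apply Finset.sup'_congr hne rfl
  intro i _
  have : (∑ j ∈ Finset.univ.erase i, (kronBlock (p i) Q)ᴴ * kronBlock (p j) Q)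
      = (∑ j ∈ Finset.univ.erase i, star (p i) ⬝ᵥ p j) • (1 : Matrix (Fin r) (Fin r) ℂ) := by
    rw [Finset.sum_smul]
    exact Finset.sum_congr rfl fun j _ => kron_mul _ _ _ hQ
  rw [this, specNorm_smul_one hr]
end

section
/- For each β ∈ (0, 1/2), the function g(a) = β ln a + ((1−2β)/2) ln(1 − aβ) − (1−β) ln(1−β) has a unique zero on the interval [2, 1/β): g(2) > 0, g is strictly decreasing on [2, 1/β), and g(a) → −∞ as a → 1/β⁻. -/
open Filter

private lemma aux_g2_pos (β : ℝ) (hβ : β ∈ Set.Ioo (0:ℝ) (1/2)) :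
    0 < β * Real.log 2 + ((1 - 2*β)/2) * Real.log (1 - 2*β) - (1 - β) * Real.log (1 - β) := by
  obtain ⟨hβ0, hβ2⟩ := hβ
  have h2β : 1 - 2*β > 0 := by linarith
  -- convexity of x ↦ x * log x at points (1-2β) and 1 with weights 1/2, 1/2
  have hconv := Real.convexOn_mul_log.2 (Set.mem_Ici.mpr (le_of_lt h2β))
    (Set.mem_Ici.mpr zero_le_one) (by norm_num : (0:ℝ) ≤ 1/2)
    (by norm_num : (0:ℝ) ≤ 1/2) (by norm_num)
  simp only [smul_eq_mul, Real.log_one, mul_one] at hconv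
  have hmid : (1/2 : ℝ) * (1 - 2*β) + 1/2 = 1 - β := by ring
  rw [hmid] at hconv
  have hlog2 : 0 < Real.log 2 := Real.log_pos (by norm_num)
  nlinarith [mul_pos hβ0 hlog2]

private lemma aux_deriv (β : ℝ) (hβ0 : 0 < β) (x : ℝ) (hx0 : x ≠ 0) (hx1 : 1 - x*β ≠ 0) :
    HasDerivAt (fun a => β * Real.log a + ((1 - 2*β)/2) * Real.log (1 - a*β)
        - (1 - β) * Real.log (1 - β))
      (β * x⁻¹ + ((1 - 2*β)/2) * ((1 - x*β)⁻¹ * (0 - 1*β))) x := by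
  have h1 : HasDerivAt (fun a : ℝ => β * Real.log a) (β * x⁻¹) x :=
    (Real.hasDerivAt_log hx0).const_mul β
  have hin : HasDerivAt (fun a : ℝ => 1 - a*β) (0 - 1*β) x :=
    (hasDerivAt_const x (1:ℝ)).sub ((hasDerivAt_id x).mul_const β)
  have h2 : HasDerivAt (fun a : ℝ => Real.log (1 - a*β)) ((1 - x*β)⁻¹ * (0 - 1*β)) x :=
    by convert hin.log hx1 using 1; ring
  exact ((h1.add (h2.const_mul _)).sub_const _)

private lemma aux_cont (β : ℝ) (hβ0 : 0 < β) :
    ContinuousOn (fun a => β * Real.log a + ((1 - 2*β)/2) * Real.log (1 - a*β)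
        - (1 - β) * Real.log (1 - β)) (Set.Ico 2 (1/β)) := by
  intro x hx
  have hx0 : x ≠ 0 := by have := hx.1; intro h; rw [h] at this; norm_num at this
  have hx1 : 1 - x*β ≠ 0 := by
    have : x * β < 1 := (lt_div_iff₀ hβ0).mp hx.2
    intro h; linarith
  exact (aux_deriv β hβ0 x hx0 hx1).continuousAt.continuousWithinAt

private lemma aux_anti (β : ℝ) (hβ : β ∈ Set.Ioo (0:ℝ) (1/2)) :
    StrictAntiOn
      (fun a => β * Real.log a + ((1 - 2*β)/2) * Real.log (1 - a*β) - (1 - β) * Real.log (1 - β))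
      (Set.Ico 2 (1/β)) := by
  obtain ⟨hβ0, hβ2⟩ := hβ
  apply strictAntiOn_of_deriv_neg (convex_Ico 2 (1/β)) (aux_cont β hβ0)
  intro x hx
  rw [interior_Ico] at hx
  obtain ⟨hx2, hxb⟩ := hx
  have hx0 : (0:ℝ) < x := by linarith
  have hxβ : x * β < 1 := (lt_div_iff₀ hβ0).mp hxb
  have hx1 : 0 < 1 - x*β := by linarith
  rw [(aux_deriv β hβ0 x (ne_of_gt hx0) (ne_of_gt hx1)).deriv]
  have heq : β * x⁻¹ + ((1 - 2*β)/2) * ((1 - x*β)⁻¹ * (0 - 1*β))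
      = β * (2 - x) / (2 * x * (1 - x*β)) := by
    have hne := ne_of_gt hx1
    have hne0 := ne_of_gt hx0
    rw [eq_div_iff (by positivity)]
    have h1 : x⁻¹ * x = 1 := inv_mul_cancel₀ hne0
    have h2 : (1 - x*β)⁻¹ * (1 - x*β) = 1 := inv_mul_cancel₀ hne
    linear_combination (2*β*(1 - x*β)) * h1 + (-(1 - 2*β)*β*x) * h2
  rw [heq]
  apply div_neg_of_neg_of_pos
  · nlinarith
  · positivity

private lemma aux_tendsto (β : ℝ) (hβ : β ∈ Set.Ioo (0:ℝ) (1/2)) :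
    Tendsto
      (fun a => β * Real.log a + ((1 - 2*β)/2) * Real.log (1 - a*β) - (1 - β) * Real.log (1 - β))
      (nhdsWithin (1/β) (Set.Iio (1/β))) atBot := by
  obtain ⟨hβ0, hβ2⟩ := hβ
  have hc : (0:ℝ) < (1 - 2*β)/2 := by linarith
  have t0 : Tendsto (fun a : ℝ => 1 - a*β) (nhdsWithin (1/β) (Set.Iio (1/β)))
      (nhdsWithin 0 (Set.Ioi 0)) := by
    rw [tendsto_nhdsWithin_iff]
    constructor
    · have hcont : Tendsto (fun a : ℝ => 1 - a*β) (nhds (1/β)) (nhds (1 - (1/β)*β)) :=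
        (continuous_const.sub (continuous_id.mul continuous_const)).tendsto (1/β)
      have : 1 - (1/β)*β = 0 := by field_simp; ring
      rw [this] at hcont
      exact hcont.mono_left nhdsWithin_le_nhds
    · filter_upwards [self_mem_nhdsWithin] with a ha
      have : a * β < 1 := (lt_div_iff₀ hβ0).mp ha
      exact Set.mem_Ioi.mpr (by linarith)
  have t1 : Tendsto (fun a : ℝ => Real.log (1 - a*β)) (nhdsWithin (1/β) (Set.Iio (1/β))) atBot :=
    Real.tendsto_log_nhdsGT_zero.comp t0
  have t2 : Tendsto (fun a : ℝ => ((1 - 2*β)/2) * Real.log (1 - a*β))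
      (nhdsWithin (1/β) (Set.Iio (1/β))) atBot := t1.const_mul_atBot hc
  have t3 : Tendsto (fun a : ℝ => β * Real.log a - (1 - β) * Real.log (1 - β))
      (nhdsWithin (1/β) (Set.Iio (1/β))) (nhds (β * Real.log (1/β) - (1 - β) * Real.log (1 - β))) := by
    have hb : (1/β : ℝ) ≠ 0 := by positivity
    exact Filter.Tendsto.mono_left
      (((Real.continuousAt_log hb).const_mul β).sub continuousAt_const) nhdsWithin_le_nhds
  have := t3.add_atBot t2
  refine this.congr fun a => by ring

/-- For β ∈ (0, 1/2), g(a) = β ln a + ((1−2β)/2) ln(1−aβ) − (1−β) ln(1−β) satisfies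
g(2) > 0, is strictly decreasing on [2, 1/β), tends to −∞ as a → (1/β)⁻, and has a
unique zero on [2, 1/β). -/
theorem stmt13 (β : ℝ) (hβ : β ∈ Set.Ioo (0:ℝ) (1/2)) :
    (0 < β * Real.log 2 + ((1 - 2*β)/2) * Real.log (1 - 2*β) - (1 - β) * Real.log (1 - β)) ∧
    StrictAntiOn
      (fun a => β * Real.log a + ((1 - 2*β)/2) * Real.log (1 - a*β) - (1 - β) * Real.log (1 - β))
      (Set.Ico 2 (1/β)) ∧
    Tendsto
      (fun a => β * Real.log a + ((1 - 2*β)/2) * Real.log (1 - a*β) - (1 - β) * Real.log (1 - β))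
      (nhdsWithin (1/β) (Set.Iio (1/β))) atBot ∧
    (∃! a, a ∈ Set.Ico (2:ℝ) (1/β) ∧
      β * Real.log a + ((1 - 2*β)/2) * Real.log (1 - a*β) - (1 - β) * Real.log (1 - β) = 0) := by
  obtain ⟨hβ0, hβ2⟩ := hβ
  set f := fun a => β * Real.log a + ((1 - 2*β)/2) * Real.log (1 - a*β)
      - (1 - β) * Real.log (1 - β) with hf
  have hg2 : 0 < f 2 := by
    show 0 < β * Real.log 2 + ((1 - 2*β)/2) * Real.log (1 - 2*β) - (1 - β) * Real.log (1 - β)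
    exact aux_g2_pos β ⟨hβ0, hβ2⟩
  have hanti := aux_anti β ⟨hβ0, hβ2⟩
  have htend := aux_tendsto β ⟨hβ0, hβ2⟩
  have h2lt : (2:ℝ) < 1/β := by
    rw [lt_div_iff₀ hβ0]; linarith
  refine ⟨hg2, hanti, htend, ?_⟩
  -- find b ∈ (2, 1/β) with f b < 0
  have hev : ∀ᶠ b in nhdsWithin (1/β) (Set.Iio (1/β)), f b < 0 ∧ 2 < b ∧ b < 1/β := by
    have e1 : ∀ᶠ b in nhdsWithin (1/β) (Set.Iio (1/β)), f b < 0 :=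
      htend.eventually (eventually_lt_atBot 0)
    have e2 : ∀ᶠ b in nhdsWithin (1/β) (Set.Iio (1/β)), 2 < b :=
      ((lt_mem_nhds h2lt) : ∀ᶠ b in nhds (1/β), 2 < b).filter_mono nhdsWithin_le_nhds
    have e3 : ∀ᶠ b in nhdsWithin (1/β) (Set.Iio (1/β)), b < 1/β := self_mem_nhdsWithin
    filter_upwards [e1, e2, e3] with b h1 h2 h3
    exact ⟨h1, h2, h3⟩
  obtain ⟨b, hfb, hb2, hbβ⟩ := hev.exists
  have hsub : Set.Icc (2:ℝ) b ⊆ Set.Ico 2 (1/β) := fun x hx =>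
    ⟨hx.1, lt_of_le_of_lt hx.2 hbβ⟩
  have hivt := intermediate_value_Icc' (le_of_lt hb2) ((aux_cont β hβ0).mono hsub)
  have h0mem : (0:ℝ) ∈ Set.Icc (f b) (f 2) := ⟨le_of_lt hfb, le_of_lt hg2⟩
  obtain ⟨a₀, ha₀, hfa₀⟩ := hivt h0mem
  have ha₀mem : a₀ ∈ Set.Ico (2:ℝ) (1/β) := hsub ha₀
  refine ⟨a₀, ⟨ha₀mem, hfa₀⟩, ?_⟩
  intro y ⟨hymem, hfy⟩
  exact hanti.injOn hymem ha₀mem (hfy.trans hfa₀.symm)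
end

section
/- Let ρ ∈ (0,1) and x ∈ (0, ρ). If p, q → ∞ with p/(p+q) → ρ, then (1/(p+q)) ln I_x(p,q) → −[ρ ln(ρ/x) + (1−ρ) ln((1−ρ)/(1−x))], where I_x(p,q) is the regularized incomplete Beta function. -/
open Filter

/-- The Beta function B(p,q) = ∫₀¹ t^(p-1) (1-t)^(q-1) dt. -/
noncomputable def betaFn (p q : ℝ) : ℝ :=
  ∫ t in (0:ℝ)..1, t ^ (p - 1) * (1 - t) ^ (q - 1)

/-- The regularized incomplete Beta function I_x(p,q). -/
noncomputable def regIncBeta (x p q : ℝ) : ℝ :=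
  (∫ t in (0:ℝ)..x, t ^ (p - 1) * (1 - t) ^ (q - 1)) / betaFn p q

/-- AM-GM kernel bound: on `[0,c]` with `c` below the mode, the kernel is at most
its value at `c`. -/
lemma kernel_le {a b t c : ℝ} (ha : 0 ≤ a) (hb : 0 ≤ b) (ht : 0 ≤ t) (htc : t ≤ c)
    (hc1 : c < 1) (hmode : c * (a + b) ≤ a) :
    t ^ a * (1 - t) ^ b ≤ c ^ a * (1 - c) ^ b := by
  rcases eq_or_lt_of_le (show (0:ℝ) ≤ a + b by linarith) with hs | hs
  · have ha0 : a = 0 := by linarith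
    have hb0 : b = 0 := by linarith
    simp [ha0, hb0]
  rcases eq_or_lt_of_le ha with ha0 | ha0
  · -- a = 0 forces b = c = t = 0 (given hmode and 0 ≤ t ≤ c)
    have hb0 : 0 < b := by linarith
    have hc0 : c ≤ 0 := by nlinarith
    have hc' : c = 0 := le_antisymm hc0 (ht.trans htc)
    have ht' : t = 0 := le_antisymm (hc' ▸ htc) ht
    simp [← ha0, hc', ht']
  rcases eq_or_lt_of_le (ht.trans htc) with hc0 | hc0
  · -- c = 0 forces t = 0 and both sides are 0
    have ht' : t = 0 := le_antisymm (hc0 ▸ htc) ht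
    rw [← hc0, ht']
  · have h1c : 0 < 1 - c := by linarith
    -- AM-GM with weights a/(a+b), b/(a+b) applied to t/c and (1-t)/(1-c)
    have hw1 : 0 ≤ a / (a + b) := by positivity
    have hw2 : 0 ≤ b / (a + b) := by positivity
    have hp1 : 0 ≤ t / c := by positivity
    have hp2 : 0 ≤ (1 - t) / (1 - c) := div_nonneg (by linarith) h1c.le
    have hwsum : a / (a + b) + b / (a + b) = 1 := by field_simp
    have hgm := Real.geom_mean_le_arith_mean2_weighted hw1 hw2 hp1 hp2 hwsum
    have harith : a / (a + b) * (t / c) + b / (a + b) * ((1 - t) / (1 - c)) ≤ 1 := by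
      have key : a * (t / c) + b * ((1 - t) / (1 - c)) ≤ a + b := by
        have hfac : 0 ≤ a * (1 - c) - b * c := by nlinarith
        have expand : a * (t / c) + b * ((1 - t) / (1 - c))
            = (a * t * (1 - c) + b * (1 - t) * c) / (c * (1 - c)) := by
          field_simp
        rw [expand, div_le_iff₀ (by positivity)]
        nlinarith [mul_nonneg (sub_nonneg.2 htc) hfac]
      have h2 : a / (a + b) * (t / c) + b / (a + b) * ((1 - t) / (1 - c))
          = (a * (t / c) + b * ((1 - t) / (1 - c))) / (a + b) := by ring
      rw [h2, div_le_one hs]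
      exact key
    have hgm1 : (t / c) ^ (a / (a+b)) * ((1 - t) / (1 - c)) ^ (b / (a+b)) ≤ 1 :=
      hgm.trans harith
    have hbig : (t / c) ^ a * ((1 - t) / (1 - c)) ^ b ≤ 1 := by
      have e1 : (t / c) ^ a = ((t / c) ^ (a / (a+b))) ^ (a + b) := by
        rw [← Real.rpow_mul hp1, div_mul_cancel₀ _ hs.ne']
      have e2 : ((1 - t) / (1 - c)) ^ b = (((1 - t) / (1 - c)) ^ (b / (a+b))) ^ (a + b) := by
        rw [← Real.rpow_mul hp2, div_mul_cancel₀ _ hs.ne']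
      rw [e1, e2, ← Real.mul_rpow (Real.rpow_nonneg hp1 _) (Real.rpow_nonneg hp2 _)]
      exact Real.rpow_le_one (by positivity) hgm1 hs.le
    have hrw : (t / c) ^ a * ((1 - t) / (1 - c)) ^ b
        = (t ^ a * (1 - t) ^ b) / (c ^ a * (1 - c) ^ b) := by
      rw [Real.div_rpow ht hc0.le, Real.div_rpow (by linarith : (0:ℝ) ≤ 1 - t) h1c.le]
      field_simp
    rw [hrw, div_le_one (by positivity)] at hbig
    exact hbig

/-- Mirror image of `kernel_le`: on `[c,1]` with `c` above the mode. -/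
lemma kernel_ge_side {a b t c : ℝ} (ha : 0 ≤ a) (hb : 0 ≤ b) (hct : c ≤ t) (ht1 : t ≤ 1)
    (hc0 : 0 < c) (hmode : a ≤ c * (a + b)) :
    t ^ a * (1 - t) ^ b ≤ c ^ a * (1 - c) ^ b := by
  have h := kernel_le (t := 1 - t) (c := 1 - c) hb ha (by linarith) (by linarith)
    (by linarith) (by nlinarith)
  have e1 : (1:ℝ) - (1 - t) = t := by ring
  have e2 : (1:ℝ) - (1 - c) = c := by ring
  rw [e1, e2] at h
  linarith [h, mul_comm ((1-t)^b) (t^a), mul_comm ((1-c)^b) (c^a)]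

/-- Global bound on the kernel by its value at the mode `a/(a+b)`. -/
lemma kernel_global {a b t : ℝ} (ha : 0 < a) (hb : 0 < b) (ht0 : 0 ≤ t) (ht1 : t ≤ 1) :
    t ^ a * (1 - t) ^ b ≤ (a / (a + b)) ^ a * (1 - a / (a + b)) ^ b := by
  have hs : 0 < a + b := by linarith
  have hc0 : 0 < a / (a + b) := by positivity
  have hc1 : a / (a + b) < 1 := (div_lt_one hs).2 (by linarith)
  have hmode : a / (a + b) * (a + b) = a := div_mul_cancel₀ _ hs.ne'
  rcases le_total t (a / (a + b)) with h | h
  · exact kernel_le ha.le hb.le ht0 h hc1 hmode.le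
  · exact kernel_ge_side ha.le hb.le h ht1 hc0 hmode.ge

lemma kernel_continuous {a b : ℝ} (ha : 0 ≤ a) (hb : 0 ≤ b) :
    Continuous fun t : ℝ => t ^ a * (1 - t) ^ b :=
  (Real.continuous_rpow_const ha).mul
    ((Real.continuous_rpow_const hb).comp (continuous_const.sub continuous_id))

/-- Lower bound for the incomplete beta integral by a rectangle over `[c,d] ⊆ [0,e]`. -/
lemma int_lower {a b c d e : ℝ} (ha : 0 < a) (hb : 0 < b) (hc : 0 < c) (hcd : c < d)
    (hde : d ≤ e) (he1 : e ≤ 1) :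
    (d - c) * (c ^ a * (1 - d) ^ b) ≤ ∫ t in (0:ℝ)..e, t ^ a * (1 - t) ^ b := by
  have hcont := kernel_continuous ha.le hb.le
  have h1 : (d - c) * (c ^ a * (1 - d) ^ b) ≤ ∫ t in c..d, t ^ a * (1 - t) ^ b := by
    have hmono := intervalIntegral.integral_mono_on (μ := MeasureTheory.volume)
      (f := fun _ : ℝ => c ^ a * (1 - d) ^ b) (g := fun t : ℝ => t ^ a * (1 - t) ^ b)
      hcd.le intervalIntegrable_const (hcont.intervalIntegrable c d)
      (fun t ht => mul_le_mul (Real.rpow_le_rpow hc.le ht.1 ha.le)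
        (Real.rpow_le_rpow (by linarith [ht.2] : (0:ℝ) ≤ 1 - d) (by linarith [ht.2]) hb.le)
        (Real.rpow_nonneg (by linarith [ht.2]) _) (Real.rpow_nonneg (by linarith [ht.1, hc]) _))
    rwa [intervalIntegral.integral_const, smul_eq_mul] at hmono
  have h2 : (∫ t in c..d, t ^ a * (1 - t) ^ b) ≤ ∫ t in (0:ℝ)..e, t ^ a * (1 - t) ^ b := by
    apply intervalIntegral.integral_mono_interval hc.le hcd.le hde
    · refine MeasureTheory.ae_restrict_of_forall_mem measurableSet_Ioc fun t ht => ?_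
      simp only [Pi.zero_apply]
      exact mul_nonneg (Real.rpow_nonneg ht.1.le _) (Real.rpow_nonneg (by linarith [ht.2]) _)
    · exact hcont.intervalIntegrable 0 e
  linarith

/-- Upper bound for the incomplete beta integral by a pointwise bound. -/
lemma int_upper {a b e C : ℝ} (ha : 0 < a) (hb : 0 < b) (he : 0 ≤ e)
    (hC : ∀ t ∈ Set.Icc (0:ℝ) e, t ^ a * (1 - t) ^ b ≤ C) :
    (∫ t in (0:ℝ)..e, t ^ a * (1 - t) ^ b) ≤ e * C := by
  have hcont := kernel_continuous ha.le hb.le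
  have hmono := intervalIntegral.integral_mono_on (μ := MeasureTheory.volume)
    (f := fun t : ℝ => t ^ a * (1 - t) ^ b) (g := fun _ : ℝ => C)
    he (hcont.intervalIntegrable 0 e) intervalIntegrable_const hC
  simpa [smul_eq_mul] using hmono

/-- If p, q → ∞ with p/(p+q) → ρ and p/(p+q) > x throughout, where 0 < x < ρ < 1, then
(1/(p+q)) ln I_x(p,q) → −[ρ ln(ρ/x) + (1−ρ) ln((1−ρ)/(1−x))]. -/
theorem stmt19 (x ρ : ℝ) (hx : 0 < x) (hxρ : x < ρ) (hρ : ρ < 1)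
    (p q : ℕ → ℝ)
    (hp : Tendsto p atTop atTop) (hq : Tendsto q atTop atTop)
    (hgt : ∀ k, x < p k / (p k + q k))
    (hratio : Tendsto (fun k => p k / (p k + q k)) atTop (nhds ρ)) :
    Tendsto (fun k => (1 / (p k + q k)) * Real.log (regIncBeta x (p k) (q k))) atTop
      (nhds (-(ρ * Real.log (ρ / x) + (1 - ρ) * Real.log ((1 - ρ) / (1 - x))))) := by
  have hρ0 : 0 < ρ := hx.trans hxρ
  have hx1 : x < 1 := hxρ.trans hρ
  have hn : Tendsto (fun k => p k + q k) atTop atTop := Filter.Tendsto.atTop_add_atTop hp hq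
  have hninv : Tendsto (fun k => 1 / (p k + q k)) atTop (nhds 0) := by
    simpa [one_div, Pi.inv_def] using hn.inv_tendsto_atTop
  have hnpos : ∀ᶠ k in atTop, 0 < p k + q k := hn.eventually_gt_atTop 0
  have hp2 : ∀ᶠ k in atTop, 2 ≤ p k := hp.eventually_ge_atTop 2
  have hq2 : ∀ᶠ k in atTop, 2 ≤ q k := hq.eventually_ge_atTop 2
  -- (p-1)/n → ρ
  have ha_div : Tendsto (fun k => (p k - 1) / (p k + q k)) atTop (nhds ρ) := by
    have h := hratio.sub hninv
    rw [sub_zero] at h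
    exact h.congr fun k => div_sub_div_same _ _ _
  -- (q-1)/n → 1-ρ
  have hb_div : Tendsto (fun k => (q k - 1) / (p k + q k)) atTop (nhds (1 - ρ)) := by
    have h : Tendsto (fun k => 1 - (p k / (p k + q k) + 1 / (p k + q k))) atTop
        (nhds (1 - (ρ + 0))) := tendsto_const_nhds.sub (hratio.add hninv)
    rw [add_zero] at h
    refine h.congr' ?_
    filter_upwards [hnpos] with k hk
    field_simp
    ring
  -- (p-1)/((p-1)+(q-1)) → ρ
  have hlam : Tendsto (fun k => (p k - 1) / ((p k - 1) + (q k - 1))) atTop (nhds ρ) := by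
    have h2n : Tendsto (fun k => ((p k - 1) + (q k - 1)) / (p k + q k)) atTop (nhds 1) := by
      have h : Tendsto (fun k => 1 - 2 * (1 / (p k + q k))) atTop (nhds (1 - 2 * 0)) :=
        tendsto_const_nhds.sub (hninv.const_mul 2)
      rw [mul_zero, sub_zero] at h
      refine h.congr' ?_
      filter_upwards [hnpos] with k hk
      field_simp
      ring
    have h := ha_div.div h2n one_ne_zero
    rw [div_one] at h
    refine h.congr' ?_
    filter_upwards [hnpos, hp2, hq2] with k hk hk2 hk3
    have hs : (0:ℝ) < (p k - 1) + (q k - 1) := by linarith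
    simp only [Pi.div_apply]
    field_simp
  -- eventually the mode is above x
  have hmodex : ∀ᶠ k in atTop, x * ((p k - 1) + (q k - 1)) ≤ p k - 1 := by
    have h := hlam.eventually (eventually_gt_nhds hxρ)
    filter_upwards [h, hp2, hq2] with k hk hk2 hk3
    have hs : (0:ℝ) < (p k - 1) + (q k - 1) := by linarith
    rw [lt_div_iff₀ hs] at hk
    linarith
  -- convenient eventual bundle
  have hev : ∀ᶠ k in atTop, 1 ≤ p k - 1 ∧ 1 ≤ q k - 1 ∧ 0 < p k + q k ∧
      x * ((p k - 1) + (q k - 1)) ≤ p k - 1 := by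
    filter_upwards [hp2, hq2, hnpos, hmodex] with k h1 h2 h3 h4
    exact ⟨by linarith, by linarith, h3, h4⟩
  -- positivity of the incomplete integral and the beta function
  have hApos : ∀ᶠ k in atTop, 0 < ∫ t in (0:ℝ)..x, t ^ (p k - 1) * (1 - t) ^ (q k - 1) := by
    filter_upwards [hev] with k ⟨h1, h2, _, _⟩
    refine lt_of_lt_of_le ?_ (int_lower (by linarith) (by linarith) (half_pos hx)
      (half_lt_self hx) le_rfl hx1.le)
    have hx2 : (0:ℝ) < x - x / 2 := by linarith
    exact mul_pos hx2 (mul_pos (Real.rpow_pos_of_pos (half_pos hx) _)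
      (Real.rpow_pos_of_pos (by linarith) _))
  have hBpos : ∀ᶠ k in atTop, 0 < betaFn (p k) (q k) := by
    filter_upwards [hev] with k ⟨h1, h2, _, _⟩
    refine lt_of_lt_of_le ?_ (int_lower (by linarith) (by linarith) (half_pos hx)
      (half_lt_self hx) hx1.le le_rfl)
    have hx2 : (0:ℝ) < x - x / 2 := by linarith
    exact mul_pos hx2 (mul_pos (Real.rpow_pos_of_pos (half_pos hx) _)
      (Real.rpow_pos_of_pos (by linarith) _))
  -- Claim 1: (1/n) log ∫₀ˣ → ρ log x + (1-ρ) log (1-x)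
  have keyA : Tendsto (fun k => (1 / (p k + q k)) *
      Real.log (∫ t in (0:ℝ)..x, t ^ (p k - 1) * (1 - t) ^ (q k - 1))) atTop
      (nhds (ρ * Real.log x + (1 - ρ) * Real.log (1 - x))) := by
    rw [tendsto_order]
    constructor
    · intro w hw
      set ε := (ρ * Real.log x + (1 - ρ) * Real.log (1 - x)) - w with hεdef
      have hεpos : 0 < ε := by simp only [hεdef]; linarith
      set c := x * Real.exp (-ε) with hcdef
      have hc0 : 0 < c := mul_pos hx (Real.exp_pos _)
      have hcx : c < x := by
        have h1 : Real.exp (-ε) < 1 := Real.exp_lt_one_iff.2 (by linarith)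
        nlinarith
      have hlogc : Real.log c = Real.log x - ε := by
        rw [hcdef, Real.log_mul hx.ne' (Real.exp_ne_zero _), Real.log_exp]; ring
      have hval : w < ρ * Real.log c + (1 - ρ) * Real.log (1 - x) := by
        rw [hlogc]; simp only [hεdef]; nlinarith
      have hLow : Tendsto (fun k => (1 / (p k + q k)) * Real.log (x - c) +
          ((p k - 1) / (p k + q k)) * Real.log c +
          ((q k - 1) / (p k + q k)) * Real.log (1 - x)) atTop
          (nhds (0 * Real.log (x - c) + ρ * Real.log c + (1 - ρ) * Real.log (1 - x))) :=
        ((hninv.mul tendsto_const_nhds).add (ha_div.mul tendsto_const_nhds)).add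
          (hb_div.mul tendsto_const_nhds)
      rw [zero_mul, zero_add] at hLow
      filter_upwards [hLow.eventually (eventually_gt_nhds hval), hev] with k h1 ⟨h2, h3, h4, _⟩
      have hlow_int := int_lower (a := p k - 1) (b := q k - 1) (by linarith) (by linarith)
        hc0 hcx le_rfl hx1.le
      have hposL : 0 < (x - c) * (c ^ (p k - 1) * (1 - x) ^ (q k - 1)) := by
        have : (0:ℝ) < x - c := by linarith
        exact mul_pos this (mul_pos (Real.rpow_pos_of_pos hc0 _)
          (Real.rpow_pos_of_pos (by linarith) _))
      have hlog_le := Real.log_le_log hposL hlow_int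
      have hexp : Real.log ((x - c) * (c ^ (p k - 1) * (1 - x) ^ (q k - 1)))
          = Real.log (x - c) + (p k - 1) * Real.log c + (q k - 1) * Real.log (1 - x) := by
        rw [Real.log_mul (by linarith : x - c ≠ 0) (mul_pos (Real.rpow_pos_of_pos hc0 _)
            (Real.rpow_pos_of_pos (by linarith) _)).ne',
          Real.log_mul (Real.rpow_pos_of_pos hc0 _).ne' (Real.rpow_pos_of_pos (by linarith) _).ne',
          Real.log_rpow hc0, Real.log_rpow (by linarith : (0:ℝ) < 1 - x)]
        ring
      calc w < (1 / (p k + q k)) * Real.log (x - c) +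
            ((p k - 1) / (p k + q k)) * Real.log c +
            ((q k - 1) / (p k + q k)) * Real.log (1 - x) := h1
        _ = (1 / (p k + q k)) *
            Real.log ((x - c) * (c ^ (p k - 1) * (1 - x) ^ (q k - 1))) := by
            rw [hexp]; ring
        _ ≤ (1 / (p k + q k)) *
            Real.log (∫ t in (0:ℝ)..x, t ^ (p k - 1) * (1 - t) ^ (q k - 1)) :=
            mul_le_mul_of_nonneg_left hlog_le (by positivity)
    · intro w hw
      have hUp : Tendsto (fun k => (1 / (p k + q k)) * Real.log x +
          ((p k - 1) / (p k + q k)) * Real.log x +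
          ((q k - 1) / (p k + q k)) * Real.log (1 - x)) atTop
          (nhds (0 * Real.log x + ρ * Real.log x + (1 - ρ) * Real.log (1 - x))) :=
        ((hninv.mul tendsto_const_nhds).add (ha_div.mul tendsto_const_nhds)).add
          (hb_div.mul tendsto_const_nhds)
      rw [zero_mul, zero_add] at hUp
      filter_upwards [hUp.eventually (eventually_lt_nhds hw), hev, hApos]
        with k h1 ⟨h2, h3, h4, h5⟩ h6
      have hup_int : (∫ t in (0:ℝ)..x, t ^ (p k - 1) * (1 - t) ^ (q k - 1))
          ≤ x * (x ^ (p k - 1) * (1 - x) ^ (q k - 1)) := by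
        apply int_upper (by linarith) (by linarith) hx.le
        intro t ht
        exact kernel_le (by linarith) (by linarith) ht.1 ht.2 hx1 h5
      have hlog_le := Real.log_le_log h6 hup_int
      have hexp : Real.log (x * (x ^ (p k - 1) * (1 - x) ^ (q k - 1)))
          = Real.log x + (p k - 1) * Real.log x + (q k - 1) * Real.log (1 - x) := by
        rw [Real.log_mul hx.ne' (mul_pos (Real.rpow_pos_of_pos hx _)
            (Real.rpow_pos_of_pos (by linarith) _)).ne',
          Real.log_mul (Real.rpow_pos_of_pos hx _).ne'
            (Real.rpow_pos_of_pos (by linarith) _).ne',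
          Real.log_rpow hx, Real.log_rpow (by linarith : (0:ℝ) < 1 - x)]
        ring
      calc (1 / (p k + q k)) * Real.log (∫ t in (0:ℝ)..x, t ^ (p k - 1) * (1 - t) ^ (q k - 1))
          ≤ (1 / (p k + q k)) * Real.log (x * (x ^ (p k - 1) * (1 - x) ^ (q k - 1))) :=
            mul_le_mul_of_nonneg_left hlog_le (by positivity)
        _ = (1 / (p k + q k)) * Real.log x + ((p k - 1) / (p k + q k)) * Real.log x +
            ((q k - 1) / (p k + q k)) * Real.log (1 - x) := by rw [hexp]; ring
        _ < w := h1
  -- Claim 2: (1/n) log B(p,q) → ρ log ρ + (1-ρ) log (1-ρ)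
  have keyB : Tendsto (fun k => (1 / (p k + q k)) * Real.log (betaFn (p k) (q k))) atTop
      (nhds (ρ * Real.log ρ + (1 - ρ) * Real.log (1 - ρ))) := by
    rw [tendsto_order]
    constructor
    · intro w hw
      set ε := (ρ * Real.log ρ + (1 - ρ) * Real.log (1 - ρ)) - w with hεdef
      have hεpos : 0 < ε := by simp only [hεdef]; linarith
      set c := ρ * Real.exp (-(ε / 2)) with hcdef
      set d := 1 - (1 - ρ) * Real.exp (-(ε / 2)) with hddef
      have hexplt : Real.exp (-(ε / 2)) < 1 := Real.exp_lt_one_iff.2 (by linarith)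
      have hexppos : 0 < Real.exp (-(ε / 2)) := Real.exp_pos _
      have hc0 : 0 < c := mul_pos hρ0 hexppos
      have hcρ : c < ρ := by nlinarith
      have hρd : ρ < d := by simp only [hddef]; nlinarith
      have hd1 : d < 1 := by
        simp only [hddef]
        nlinarith
      have h1d : 1 - d = (1 - ρ) * Real.exp (-(ε / 2)) := by simp only [hddef]; ring
      have hlogc : Real.log c = Real.log ρ - ε / 2 := by
        rw [hcdef, Real.log_mul hρ0.ne' (Real.exp_ne_zero _), Real.log_exp]; ring
      have hlog1d : Real.log (1 - d) = Real.log (1 - ρ) - ε / 2 := by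
        rw [h1d, Real.log_mul (by linarith : (1:ℝ) - ρ ≠ 0) (Real.exp_ne_zero _),
          Real.log_exp]; ring
      have hval : w < ρ * Real.log c + (1 - ρ) * Real.log (1 - d) := by
        rw [hlogc, hlog1d]; simp only [hεdef]; nlinarith
      have hLow : Tendsto (fun k => (1 / (p k + q k)) * Real.log (d - c) +
          ((p k - 1) / (p k + q k)) * Real.log c +
          ((q k - 1) / (p k + q k)) * Real.log (1 - d)) atTop
          (nhds (0 * Real.log (d - c) + ρ * Real.log c + (1 - ρ) * Real.log (1 - d))) :=
        ((hninv.mul tendsto_const_nhds).add (ha_div.mul tendsto_const_nhds)).add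
          (hb_div.mul tendsto_const_nhds)
      rw [zero_mul, zero_add] at hLow
      filter_upwards [hLow.eventually (eventually_gt_nhds hval), hev] with k h1 ⟨h2, h3, h4, _⟩
      have hcd : c < d := hcρ.trans hρd
      have hlow_int := int_lower (a := p k - 1) (b := q k - 1) (by linarith) (by linarith)
        hc0 hcd hd1.le le_rfl
      have hposL : 0 < (d - c) * (c ^ (p k - 1) * (1 - d) ^ (q k - 1)) := by
        have : (0:ℝ) < d - c := by linarith
        exact mul_pos this (mul_pos (Real.rpow_pos_of_pos hc0 _)
          (Real.rpow_pos_of_pos (by linarith) _))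
      have hlog_le := Real.log_le_log hposL hlow_int
      have hexp : Real.log ((d - c) * (c ^ (p k - 1) * (1 - d) ^ (q k - 1)))
          = Real.log (d - c) + (p k - 1) * Real.log c + (q k - 1) * Real.log (1 - d) := by
        rw [Real.log_mul (by linarith : d - c ≠ 0) (mul_pos (Real.rpow_pos_of_pos hc0 _)
            (Real.rpow_pos_of_pos (by linarith) _)).ne',
          Real.log_mul (Real.rpow_pos_of_pos hc0 _).ne'
            (Real.rpow_pos_of_pos (by linarith) _).ne',
          Real.log_rpow hc0, Real.log_rpow (by linarith : (0:ℝ) < 1 - d)]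
        ring
      calc w < (1 / (p k + q k)) * Real.log (d - c) +
            ((p k - 1) / (p k + q k)) * Real.log c +
            ((q k - 1) / (p k + q k)) * Real.log (1 - d) := h1
        _ = (1 / (p k + q k)) *
            Real.log ((d - c) * (c ^ (p k - 1) * (1 - d) ^ (q k - 1))) := by
            rw [hexp]; ring
        _ ≤ (1 / (p k + q k)) * Real.log (betaFn (p k) (q k)) :=
            mul_le_mul_of_nonneg_left hlog_le (by positivity)
    · intro w hw
      -- log of the mode sequence
      have hloglam : Tendsto (fun k => Real.log ((p k - 1) / ((p k - 1) + (q k - 1)))) atTop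
          (nhds (Real.log ρ)) :=
        ((Real.continuousAt_log hρ0.ne').tendsto).comp hlam
      have hlam1 : Tendsto (fun k => 1 - (p k - 1) / ((p k - 1) + (q k - 1))) atTop
          (nhds (1 - ρ)) := tendsto_const_nhds.sub hlam
      have hloglam1 : Tendsto (fun k => Real.log (1 - (p k - 1) / ((p k - 1) + (q k - 1))))
          atTop (nhds (Real.log (1 - ρ))) :=
        ((Real.continuousAt_log (by linarith : (1:ℝ) - ρ ≠ 0)).tendsto).comp hlam1
      have hUp : Tendsto (fun k =>
          ((p k - 1) / (p k + q k)) * Real.log ((p k - 1) / ((p k - 1) + (q k - 1))) +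
          ((q k - 1) / (p k + q k)) * Real.log (1 - (p k - 1) / ((p k - 1) + (q k - 1))))
          atTop (nhds (ρ * Real.log ρ + (1 - ρ) * Real.log (1 - ρ))) :=
        (ha_div.mul hloglam).add (hb_div.mul hloglam1)
      filter_upwards [hUp.eventually (eventually_lt_nhds hw), hev, hBpos]
        with k h1 ⟨h2, h3, h4, _⟩ h6
      set lam := (p k - 1) / ((p k - 1) + (q k - 1)) with hlamdef
      have hs : (0:ℝ) < (p k - 1) + (q k - 1) := by linarith
      have hlam0 : 0 < lam := by simp only [hlamdef]; positivity
      have hlam1' : lam < 1 := by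
        simp only [hlamdef]
        rw [div_lt_one hs]; linarith
      have hup_int : betaFn (p k) (q k) ≤ 1 * (lam ^ (p k - 1) * (1 - lam) ^ (q k - 1)) := by
        apply int_upper (by linarith) (by linarith) zero_le_one
        intro t ht
        exact kernel_global (by linarith) (by linarith) ht.1 ht.2
      rw [one_mul] at hup_int
      have hlog_le := Real.log_le_log h6 hup_int
      have hexp : Real.log (lam ^ (p k - 1) * (1 - lam) ^ (q k - 1))
          = (p k - 1) * Real.log lam + (q k - 1) * Real.log (1 - lam) := by
        rw [Real.log_mul (Real.rpow_pos_of_pos hlam0 _).ne'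
            (Real.rpow_pos_of_pos (by linarith) _).ne',
          Real.log_rpow hlam0, Real.log_rpow (by linarith : (0:ℝ) < 1 - lam)]
      calc (1 / (p k + q k)) * Real.log (betaFn (p k) (q k))
          ≤ (1 / (p k + q k)) * Real.log (lam ^ (p k - 1) * (1 - lam) ^ (q k - 1)) :=
            mul_le_mul_of_nonneg_left hlog_le (by positivity)
        _ = ((p k - 1) / (p k + q k)) * Real.log lam +
            ((q k - 1) / (p k + q k)) * Real.log (1 - lam) := by rw [hexp]; ring
        _ < w := h1
  -- combine
  have hfinal := keyA.sub keyB
  have heq : (ρ * Real.log x + (1 - ρ) * Real.log (1 - x)) -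
      (ρ * Real.log ρ + (1 - ρ) * Real.log (1 - ρ))
      = -(ρ * Real.log (ρ / x) + (1 - ρ) * Real.log ((1 - ρ) / (1 - x))) := by
    rw [Real.log_div hρ0.ne' hx.ne', Real.log_div (by linarith : (1:ℝ) - ρ ≠ 0)
      (by linarith : (1:ℝ) - x ≠ 0)]
    ring
  rw [heq] at hfinal
  refine hfinal.congr' ?_
  filter_upwards [hApos, hBpos] with k h1 h2
  rw [regIncBeta, Real.log_div h1.ne' h2.ne']
  ring
end
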